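/- Let k,m,r ∈ ℕ satisfy 1/k + 1/m + 1/r ≤ 1, let ℓ = lcm(k,m), g = gcd(k,m), and assume ℓ ∣ r. If P, Q, R ∈ ℂ[X₁,…,Xₙ] with R ≠ 0 satisfy P^k + Q^m = R^r, then there exist α₁, α₂ ∈ ℂ such that P = α₁·R^{(m/g)(r/ℓ)} and Q = α₂·R^{(k/g)(r/ℓ)}. -/

import Mathlib

open MvPolynomial

namespace MSAux

open Polynomial UniqueFactorizationMonoid UniqueFactorizationDomain
open scoped nonZeroDivisors

theorem flt_catalan_deg {F : Type*} [Field F] [CharZero F] {k m r : ℕ}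
    (hk : 0 < k) (hm : 0 < m) (hr : 0 < r)
    (hineq : m * r + k * r + k * m ≤ k * m * r) {a b c : F[X]}
    (ha : a ≠ 0) (hb : b ≠ 0) (hc : c ≠ 0)
    (hab : IsCoprime a b) (hbc : IsCoprime b c) (hca : IsCoprime c a)
    (heq : a ^ k + b ^ m = c ^ r) :
    a.natDegree = 0 ∧ b.natDegree = 0 ∧ c.natDegree = 0 := by
  classical
  have hA : a ^ k ≠ 0 := pow_ne_zero _ ha
  have hB : b ^ m ≠ 0 := pow_ne_zero _ hb
  have hC : -(c ^ r) ≠ 0 := neg_ne_zero.2 (pow_ne_zero _ hc)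
  have hsum : a ^ k + b ^ m + -(c ^ r) = 0 := by rw [heq]; ring
  have hab' : IsCoprime (a ^ k) (b ^ m) := hab.pow
  have hbc' : IsCoprime (b ^ m) (-(c ^ r)) := (hbc.pow).neg_right
  have hca' : IsCoprime (-(c ^ r)) (a ^ k) := (hca.pow).neg_left
  rcases Polynomial.abc hA hB hC hab' hsum with h | h
  · exfalso
    obtain ⟨h1, h2, h3⟩ := h
    have hacr : IsCoprime (a ^ k) (c ^ r) := hca.symm.pow
    have hbcr : IsCoprime (b ^ m) (c ^ r) := hbc.pow
    have hrad : radical (a ^ k * b ^ m * -(c ^ r)) = radical a * radical b * radical c := by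
      rw [mul_neg, radical_neg, radical_mul (hacr.mul_left hbcr).isRelPrime, radical_mul hab'.isRelPrime,
        radical_pow a hk.ne', radical_pow b hm.ne', radical_pow c hr.ne']
    set S := a.natDegree + b.natDegree + c.natDegree with hS
    have hradle : (radical (a ^ k * b ^ m * -(c ^ r))).natDegree ≤ S := by
      rw [hrad]
      calc (radical a * radical b * radical c).natDegree
          = (radical a).natDegree + (radical b).natDegree + (radical c).natDegree := by
            rw [Polynomial.natDegree_mul (mul_ne_zero (radical_ne_zero (a := a)) (radical_ne_zero (a := b)))
                (radical_ne_zero (a := c)),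
              Polynomial.natDegree_mul (radical_ne_zero (a := a)) (radical_ne_zero (a := b))]
        _ ≤ S := by
            refine Nat.add_le_add (Nat.add_le_add ?_ ?_) ?_ <;>
              exact Polynomial.natDegree_le_of_dvd radical_dvd_self ‹_›
    have h1' : k * a.natDegree + 1 ≤ S := by
      have := h1.trans hradle; rwa [Polynomial.natDegree_pow] at this
    have h2' : m * b.natDegree + 1 ≤ S := by
      have := h2.trans hradle; rwa [Polynomial.natDegree_pow] at this
    have h3' : r * c.natDegree + 1 ≤ S := by
      have := h3.trans hradle
      rwa [Polynomial.natDegree_neg, Polynomial.natDegree_pow] at this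
    have e1 : m * r * (k * a.natDegree + 1) ≤ m * r * S := Nat.mul_le_mul_left _ h1'
    have e2 : k * r * (m * b.natDegree + 1) ≤ k * r * S := Nat.mul_le_mul_left _ h2'
    have e3 : k * m * (r * c.natDegree + 1) ≤ k * m * S := Nat.mul_le_mul_left _ h3'
    have big : k * m * r * S + (m * r + k * r + k * m) ≤ (m * r + k * r + k * m) * S := by
      have hsum3 := Nat.add_le_add (Nat.add_le_add e1 e2) e3
      calc k * m * r * S + (m * r + k * r + k * m)
          = m * r * (k * a.natDegree + 1) + k * r * (m * b.natDegree + 1)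
              + k * m * (r * c.natDegree + 1) := by rw [hS]; ring
        _ ≤ m * r * S + k * r * S + k * m * S := hsum3
        _ = (m * r + k * r + k * m) * S := by ring
    have small : (m * r + k * r + k * m) * S ≤ k * m * r * S := Nat.mul_le_mul_right _ hineq
    have contra : k * m * r * S + (m * r + k * r + k * m) ≤ k * m * r * S + 0 := by
      simpa using big.trans small
    have hT : m * r + k * r + k * m ≤ 0 := Nat.le_of_add_le_add_left contra
    have : 0 < k * m := Nat.mul_pos hk hm
    omega
  · obtain ⟨h1, h2, h3⟩ := h
    refine ⟨?_, ?_, ?_⟩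
    · have := Polynomial.natDegree_eq_zero_of_derivative_eq_zero h1
      rw [Polynomial.natDegree_pow] at this
      exact (Nat.mul_eq_zero.mp this).resolve_left hk.ne'
    · have := Polynomial.natDegree_eq_zero_of_derivative_eq_zero h2
      rw [Polynomial.natDegree_pow] at this
      exact (Nat.mul_eq_zero.mp this).resolve_left hm.ne'
    · rw [derivative_neg, neg_eq_zero] at h3
      have := Polynomial.natDegree_eq_zero_of_derivative_eq_zero h3
      rw [Polynomial.natDegree_pow] at this
      exact (Nat.mul_eq_zero.mp this).resolve_left hr.ne'


theorem associated_of_pow_eq_pow {α : Type*} [CommMonoidWithZero α]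
    [UniqueFactorizationMonoid α] {u v : α} (hu : u ≠ 0) (hv : v ≠ 0) {m : ℕ} (hm : 0 < m)
    (h : u ^ m = v ^ m) : Associated u v := by
  classical
  letI : NormalizationMonoid α := UniqueFactorizationMonoid.normalizationMonoid.toNormalizationMonoid
  rw [UniqueFactorizationMonoid.associated_iff_normalizedFactors_eq_normalizedFactors hu hv]
  have key : m • normalizedFactors u = m • normalizedFactors v := by
    rw [← UniqueFactorizationMonoid.normalizedFactors_pow,
      ← UniqueFactorizationMonoid.normalizedFactors_pow, h]
  ext p
  have := congrArg (Multiset.count p) key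
  rw [Multiset.count_nsmul, Multiset.count_nsmul] at this
  exact Nat.eq_of_mul_eq_mul_left hm this

theorem eq_C_of_totalDegree_eq_zero {n : ℕ} {F : Type*} [CommSemiring F]
    {f : MvPolynomial (Fin n) F} (hf : f.totalDegree = 0) : ∃ c : F, f = MvPolynomial.C c := by
  refine ⟨MvPolynomial.coeff 0 f, ?_⟩
  have h := (MvPolynomial.totalDegree_eq_zero_iff _ f).mp hf
  apply MvPolynomial.ext
  intro d
  rw [MvPolynomial.coeff_C]
  by_cases hd : 0 = d
  · subst hd; simp
  · rw [if_neg hd]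
    by_contra hne
    have hdsup : d ∈ f.support := by
      simp [MvPolynomial.mem_support_iff]
      exact fun h' => hne h'
    have : d = 0 := by
      ext x; exact h d hdsup x
    exact hd this.symm

theorem exists_C_of_isUnit : ∀ {n : ℕ} {u : MvPolynomial (Fin n) ℂ},
    IsUnit u → ∃ c : ℂ, u = MvPolynomial.C c := by
  intro n
  induction n with
  | zero =>
    intro u _
    obtain ⟨c, hc⟩ := MvPolynomial.C_surjective (Fin 0) u
    exact ⟨c, hc.symm⟩
  | succ n ih =>
    intro u hu
    set e := MvPolynomial.finSuccEquiv ℂ n with he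
    have hv : IsUnit (e u) := hu.map e
    obtain ⟨w, hw⟩ := hv.exists_right_inv
    have hv0 : e u ≠ 0 := fun h => by simp [h] at hw
    have hw0 : w ≠ 0 := fun h => by simp [h] at hw
    have hdeg : (e u).natDegree = 0 := by
      have := Polynomial.natDegree_mul hv0 hw0
      rw [hw] at this
      simp at this
      omega
    have hC : e u = Polynomial.C ((e u).coeff 0) := Polynomial.eq_C_of_natDegree_eq_zero hdeg
    have hcoef : IsUnit ((e u).coeff 0) := by
      rw [hC] at hv; exact Polynomial.isUnit_C.mp hv
    obtain ⟨c, hc⟩ := ih hcoef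
    refine ⟨c, ?_⟩
    have : e u = Polynomial.C (MvPolynomial.C c) := by rw [hC, hc]
    have hec : e (MvPolynomial.C c) = Polynomial.C (MvPolynomial.C c) := by
      simpa using e.commutes c
    have := this.trans hec.symm
    exact e.injective this


theorem isCoprime_map_of_no_common_prime {R : Type*} [CommRing R] [IsDomain R]
    [UniqueFactorizationMonoid R] (K : Type*) [Field K] [Algebra R K] [IsFractionRing R K]
    {f g : R[X]} (hf : f ≠ 0) (hg : g ≠ 0)
    (hno : ∀ p : R[X], Prime p → p ∣ f → p ∣ g → False) :
    IsCoprime (f.map (algebraMap R K)) (g.map (algebraMap R K)) := by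
  classical
  letI : NormalizationMonoid R := UniqueFactorizationMonoid.normalizationMonoid.toNormalizationMonoid
  letI : NormalizedGCDMonoid R := UniqueFactorizationMonoid.toNormalizedGCDMonoid R
  have hinj : Function.Injective (algebraMap R K) := IsFractionRing.injective R K
  have hpinj : Function.Injective (Polynomial.map (algebraMap R K)) :=
    fun p q h => Polynomial.ext fun i => hinj (by
      have := congrArg (fun t => Polynomial.coeff t i) h
      simpa using this)
  by_contra hnc
  have hf' : f.map (algebraMap R K) ≠ 0 := fun h => hf (hpinj (by simpa using h))
  have hg' : g.map (algebraMap R K) ≠ 0 := fun h => hg (hpinj (by simpa using h))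
  set d := EuclideanDomain.gcd (f.map (algebraMap R K)) (g.map (algebraMap R K)) with hd
  have hdu : ¬IsUnit d := fun h => hnc (EuclideanDomain.gcd_isUnit_iff.mp h)
  have hd0 : d ≠ 0 := fun h => hf' (EuclideanDomain.gcd_eq_zero_iff.mp h).1
  obtain ⟨π, hπirr, hπd⟩ := WfDvdMonoid.exists_irreducible_factor hdu hd0
  have hπf : π ∣ f.map (algebraMap R K) := hπd.trans (EuclideanDomain.gcd_dvd_left _ _)
  have hπg : π ∣ g.map (algebraMap R K) := hπd.trans (EuclideanDomain.gcd_dvd_right _ _)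
  have hπ0 : π ≠ 0 := hπirr.ne_zero
  -- integer normalization of π
  set N := IsLocalization.integerNormalization R⁰ π with hN
  obtain ⟨⟨s, hs0⟩, hs⟩ := IsLocalization.integerNormalization_map_to_map R⁰ π
  have hsne : algebraMap R K s ≠ 0 := by
    intro h
    exact nonZeroDivisors.ne_zero hs0 (hinj (by simpa using h))
  have hsmul : N.map (algebraMap R K) = Polynomial.C (algebraMap R K s) * π := by
    rw [hs, Algebra.smul_def, IsScalarTower.algebraMap_apply R K K[X], Polynomial.algebraMap_eq]
  have hNne : N ≠ 0 := by
    intro h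
    rw [h, Polynomial.map_zero] at hsmul
    exact hπ0 ((mul_eq_zero.mp hsmul.symm).resolve_left (by simpa using hsne))
  have hcontent : N.content ≠ 0 := fun h => hNne (Polynomial.content_eq_zero_iff.mp h)
  have hmapfac : Polynomial.C (algebraMap R K N.content) * N.primPart.map (algebraMap R K)
      = Polynomial.C (algebraMap R K s) * π := by
    rw [← hsmul]
    conv_rhs => rw [N.eq_C_content_mul_primPart]
    rw [Polynomial.map_mul, Polynomial.map_C]
  set π₀ := N.primPart with hπ₀
  have hu1 : IsUnit (Polynomial.C (algebraMap R K N.content) : K[X]) :=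
    Polynomial.isUnit_C.mpr (isUnit_iff_ne_zero.mpr (fun h => hcontent (hinj (by simpa using h))))
  have hu2 : IsUnit (Polynomial.C (algebraMap R K s) : K[X]) :=
    Polynomial.isUnit_C.mpr (isUnit_iff_ne_zero.mpr hsne)
  obtain ⟨u1, hu1'⟩ := hu1
  obtain ⟨u2, hu2'⟩ := hu2
  have hassoc : Associated (π₀.map (algebraMap R K)) π := by
    refine ⟨u1 * u2⁻¹, ?_⟩
    have : (u1 : K[X]) * π₀.map (algebraMap R K) = (u2 : K[X]) * π := by
      rw [hu1', hu2']; exact hmapfac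
    calc π₀.map (algebraMap R K) * (u1 * u2⁻¹ : K[X]ˣ)
        = ((u1 : K[X]) * π₀.map (algebraMap R K)) * (u2⁻¹ : K[X]ˣ) := by
          push_cast; ring
      _ = ((u2 : K[X]) * π) * (u2⁻¹ : K[X]ˣ) := by rw [this]
      _ = π * ((u2 : K[X]) * (u2⁻¹ : K[X]ˣ)) := by ring
      _ = π := by rw [← Units.val_mul, mul_inv_cancel, Units.val_one, mul_one]
  have hπ₀irr : Irreducible π₀ :=
    (Polynomial.isPrimitive_primPart N).irreducible_iff_irreducible_map_fraction_map.mpr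
      (hassoc.symm.irreducible hπirr)
  have hπ₀prime : Prime π₀ := (UniqueFactorizationMonoid.irreducible_iff_prime).mp hπ₀irr
  have key : ∀ q : R[X], q ≠ 0 → π ∣ q.map (algebraMap R K) → π₀ ∣ q := by
    intro q hq hπq
    have h1 : π₀.map (algebraMap R K) ∣ q.map (algebraMap R K) := hassoc.dvd.trans hπq
    have hcq : q.content ≠ 0 := fun h => hq (Polynomial.content_eq_zero_iff.mp h)
    have hcu : IsUnit (Polynomial.C (algebraMap R K q.content) : K[X]) :=
      Polynomial.isUnit_C.mpr (isUnit_iff_ne_zero.mpr (fun h => hcq (hinj (by simpa using h))))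
    have hmapq : q.map (algebraMap R K)
        = Polynomial.C (algebraMap R K q.content) * q.primPart.map (algebraMap R K) := by
      conv_lhs => rw [q.eq_C_content_mul_primPart]
      rw [Polynomial.map_mul, Polynomial.map_C]
    rw [hmapq] at h1
    obtain ⟨uc, huc⟩ := hcu
    rw [← huc] at h1
    have h2 : π₀.map (algebraMap R K) ∣ q.primPart.map (algebraMap R K) :=
      (Units.dvd_mul_left).mp h1
    exact ((Polynomial.isPrimitive_primPart N).dvd_of_fraction_map_dvd_fraction_map
      h2).trans q.primPart_dvd
  exact hno π₀ hπ₀prime (key f hf hπf) (key g hg hπg)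



theorem totalDegree_eq_zero_of_degreeOf {n : ℕ} {f : MvPolynomial (Fin n) ℂ}
    (h : ∀ i, MvPolynomial.degreeOf i f = 0) : f.totalDegree = 0 := by
  rw [MvPolynomial.totalDegree_eq_zero_iff]
  intro d hd x
  have := (MvPolynomial.degreeOf_le_iff.mp (le_of_eq (h x))) d hd
  omega

theorem coprime_case (n : ℕ) {k m r : ℕ} (hk : 0 < k) (hm : 0 < m) (hr : 0 < r)
    (hineq : m * r + k * r + k * m ≤ k * m * r) {P Q R : MvPolynomial (Fin n) ℂ}
    (hP : P ≠ 0) (hQ : Q ≠ 0) (hR : R ≠ 0)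
    (hno : ∀ p, Prime p → p ∣ P → p ∣ Q → False)
    (heq : P ^ k + Q ^ m = R ^ r) :
    P.totalDegree = 0 ∧ Q.totalDegree = 0 ∧ R.totalDegree = 0 := by
  classical
  have hQR : ∀ p, Prime p → p ∣ Q → p ∣ R → False := by
    intro p hp hpQ hpR
    have h1 : p ∣ P ^ k := by
      have : P ^ k = R ^ r - Q ^ m := by rw [← heq]; ring
      rw [this]
      exact dvd_sub (dvd_pow hpR hr.ne') (dvd_pow hpQ hm.ne')
    exact hno p hp (hp.dvd_of_dvd_pow h1) hpQ
  have hRP : ∀ p, Prime p → p ∣ R → p ∣ P → False := by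
    intro p hp hpR hpP
    have h1 : p ∣ Q ^ m := by
      have : Q ^ m = R ^ r - P ^ k := by rw [← heq]; ring
      rw [this]
      exact dvd_sub (dvd_pow hpR hr.ne') (dvd_pow hpP hk.ne')
    exact hno p hp hpP (hp.dvd_of_dvd_pow h1)
  cases n with
  | zero =>
    refine ⟨?_, ?_, ?_⟩ <;>
      exact totalDegree_eq_zero_of_degreeOf (fun i => i.elim0)
  | succ n =>
    suffices hdeg : ∀ i : Fin (n + 1), MvPolynomial.degreeOf i P = 0 ∧
        MvPolynomial.degreeOf i Q = 0 ∧ MvPolynomial.degreeOf i R = 0 by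
      exact ⟨totalDegree_eq_zero_of_degreeOf (fun i => (hdeg i).1),
        totalDegree_eq_zero_of_degreeOf (fun i => (hdeg i).2.1),
        totalDegree_eq_zero_of_degreeOf (fun i => (hdeg i).2.2)⟩
    intro i
    set σ := Equiv.swap (0 : Fin (n + 1)) i with hσ
    set Φ := (MvPolynomial.renameEquiv ℂ σ).trans (MvPolynomial.finSuccEquiv ℂ n) with hΦ
    set R₀ := MvPolynomial (Fin n) ℂ
    set K := FractionRing R₀
    haveI : CharZero K :=
      charZero_of_injective_algebraMap (IsFractionRing.injective R₀ K)
    have hΦdeg : ∀ f : MvPolynomial (Fin (n + 1)) ℂ, (Φ f).natDegree =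
        MvPolynomial.degreeOf i f := by
      intro f
      have h1 : Φ f = (MvPolynomial.finSuccEquiv ℂ n) (MvPolynomial.rename σ f) := rfl
      rw [h1, MvPolynomial.natDegree_finSuccEquiv]
      have := MvPolynomial.degreeOf_rename_of_injective (p := f) σ.injective i
      rw [Equiv.swap_apply_right] at this
      exact this
    have hΦ0 : ∀ f : MvPolynomial (Fin (n + 1)) ℂ, f ≠ 0 → Φ f ≠ 0 := by
      intro f hf h
      exact hf (by simpa using congrArg Φ.symm h)
    have htrans : ∀ {A B : MvPolynomial (Fin (n + 1)) ℂ},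
        (∀ p, Prime p → p ∣ A → p ∣ B → False) →
        ∀ p : R₀[X], Prime p → p ∣ Φ A → p ∣ Φ B → False := by
      intro A B hAB p hp hpA hpB
      refine hAB (Φ.symm p) ((MulEquiv.prime_iff Φ.symm).mpr hp) ?_ ?_
      · have := map_dvd Φ.symm hpA
        simpa using this
      · have := map_dvd Φ.symm hpB
        simpa using this
    have hcPQ := isCoprime_map_of_no_common_prime K (hΦ0 P hP) (hΦ0 Q hQ) (htrans hno)
    have hcQR := isCoprime_map_of_no_common_prime K (hΦ0 Q hQ) (hΦ0 R hR) (htrans hQR)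
    have hcRP := isCoprime_map_of_no_common_prime K (hΦ0 R hR) (hΦ0 P hP) (htrans hRP)
    have hmapinj : Function.Injective (Polynomial.map (algebraMap R₀ K)) := by
      intro p q h
      apply Polynomial.ext
      intro j
      apply IsFractionRing.injective R₀ K
      have := congrArg (fun t => Polynomial.coeff t j) h
      simpa using this
    have hmne : ∀ f : MvPolynomial (Fin (n + 1)) ℂ, f ≠ 0 →
        (Φ f).map (algebraMap R₀ K) ≠ 0 := by
      intro f hf h
      exact hΦ0 f hf (hmapinj (by simpa using h))
    have heqK : ((Φ P).map (algebraMap R₀ K)) ^ k + ((Φ Q).map (algebraMap R₀ K)) ^ m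
        = ((Φ R).map (algebraMap R₀ K)) ^ r := by
      have h1 : Φ (P ^ k + Q ^ m) = Φ (R ^ r) := congrArg Φ heq
      rw [map_add, map_pow, map_pow, map_pow] at h1
      have := congrArg (Polynomial.map (algebraMap R₀ K)) h1
      rw [Polynomial.map_add, Polynomial.map_pow, Polynomial.map_pow,
        Polynomial.map_pow] at this
      exact this
    obtain ⟨d1, d2, d3⟩ := flt_catalan_deg hk hm hr hineq (hmne P hP) (hmne Q hQ) (hmne R hR)
      hcPQ hcQR hcRP heqK
    rw [Polynomial.natDegree_map_eq_of_injective (IsFractionRing.injective R₀ K)] at d1 d2 d3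
    rw [hΦdeg P] at d1
    rw [hΦdeg Q] at d2
    rw [hΦdeg R] at d3
    exact ⟨d1, d2, d3⟩


-- power cancellation helpers
theorem pow_mul_cancel_aux {α : Type*} [CommRing α] [IsDomain α] {p W V : α} (hp : Prime p)
    (hW : ¬ p ∣ W) (hV : ¬ p ∣ V) {x z : ℕ} (h : p ^ x * W = p ^ z * V) : x = z ∧ W = V := by
  rcases lt_trichotomy x z with hxz | hxz | hxz
  · exfalso
    obtain ⟨t, rfl⟩ := Nat.exists_eq_add_of_lt hxz
    rw [pow_add, pow_add, mul_assoc, mul_assoc] at h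
    have := mul_left_cancel₀ (pow_ne_zero x hp.ne_zero) h
    exact hW ⟨p ^ t * V, by rw [this]; ring⟩
  · subst hxz
    exact ⟨rfl, mul_left_cancel₀ (pow_ne_zero x hp.ne_zero) h⟩
  · exfalso
    obtain ⟨t, rfl⟩ := Nat.exists_eq_add_of_lt hxz
    rw [pow_add, pow_add, mul_assoc, mul_assoc] at h
    have := mul_left_cancel₀ (pow_ne_zero z hp.ne_zero) h
    exact hV ⟨p ^ t * W, by rw [← this]; ring⟩

theorem pow_le_aux {α : Type*} [CommRing α] [IsDomain α] {p W V : α} (hp : Prime p)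
    (hV : ¬ p ∣ V) {x z : ℕ} (h : p ^ x * W = p ^ z * V) : x ≤ z := by
  by_contra hc
  push_neg at hc
  obtain ⟨t, rfl⟩ := Nat.exists_eq_add_of_lt hc
  rw [pow_add, pow_add, mul_assoc, mul_assoc] at h
  have := mul_left_cancel₀ (pow_ne_zero z hp.ne_zero) h
  exact hV ⟨p ^ t * W, by rw [← this]; ring⟩

theorem isUnit_C_of_ne_zero {n : ℕ} {c : ℂ} (hc : c ≠ 0) :
    IsUnit (MvPolynomial.C c : MvPolynomial (Fin n) ℂ) :=
  IsUnit.of_mul_eq_one (MvPolynomial.C c⁻¹) (by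
    rw [← MvPolynomial.C_mul, mul_inv_cancel₀ hc, MvPolynomial.C_1])

theorem main (n k m r : ℕ) (hk : 0 < k) (hm : 0 < m) (hr : 0 < r)
    (hkr : k ∣ r) (hmr : m ∣ r) (hlcm : Nat.lcm k m = r)
    (hineq : m * r + k * r + k * m ≤ k * m * r) :
    ∀ R : MvPolynomial (Fin n) ℂ, R ≠ 0 → ∀ P Q : MvPolynomial (Fin n) ℂ,
      P ^ k + Q ^ m = R ^ r →
      ∃ α₁ α₂ : ℂ, P = MvPolynomial.C α₁ * R ^ (r / k) ∧
        Q = MvPolynomial.C α₂ * R ^ (r / m) := by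
  intro R
  refine (IsWellFounded.wf (r := DvdNotUnit)).induction
    (C := fun R => R ≠ 0 → ∀ P Q : MvPolynomial (Fin n) ℂ,
      P ^ k + Q ^ m = R ^ r →
      ∃ α₁ α₂ : ℂ, P = MvPolynomial.C α₁ * R ^ (r / k) ∧
        Q = MvPolynomial.C α₂ * R ^ (r / m)) R ?_
  clear R
  intro R IH hR P Q heq
  by_cases hP : P = 0
  · -- Q^m = R^r
    subst hP
    rw [zero_pow hk.ne', zero_add] at heq
    have hQ : Q ≠ 0 := by
      intro h; rw [h, zero_pow hm.ne'] at heq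
      exact hR (pow_eq_zero_iff hr.ne' |>.mp heq.symm)
    have hpow : Q ^ m = (R ^ (r / m)) ^ m := by
      rw [← pow_mul, Nat.div_mul_cancel hmr, heq]
    have hassoc := associated_of_pow_eq_pow hQ (pow_ne_zero _ hR) hm hpow
    obtain ⟨u, hu⟩ := hassoc.symm
    obtain ⟨c, hc⟩ := exists_C_of_isUnit u.isUnit
    refine ⟨0, c, by simp, ?_⟩
    rw [← hu, hc]; ring
  by_cases hQ : Q = 0
  · subst hQ
    rw [zero_pow hm.ne', add_zero] at heq
    have hpow : P ^ k = (R ^ (r / k)) ^ k := by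
      rw [← pow_mul, Nat.div_mul_cancel hkr, heq]
    have hassoc := associated_of_pow_eq_pow hP (pow_ne_zero _ hR) hk hpow
    obtain ⟨u, hu⟩ := hassoc.symm
    obtain ⟨c, hc⟩ := exists_C_of_isUnit u.isUnit
    refine ⟨c, 0, ?_, by simp⟩
    rw [← hu, hc]; ring
  by_cases hcop : ∀ p, Prime p → p ∣ P → p ∣ Q → False
  · obtain ⟨d1, d2, d3⟩ := coprime_case n hk hm hr hineq hP hQ hR hcop heq
    obtain ⟨p₀, rfl⟩ := eq_C_of_totalDegree_eq_zero d1
    obtain ⟨q₀, rfl⟩ := eq_C_of_totalDegree_eq_zero d2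
    obtain ⟨ρ, rfl⟩ := eq_C_of_totalDegree_eq_zero d3
    have hρ : ρ ≠ 0 := fun h => hR (by rw [h, MvPolynomial.C_0])
    refine ⟨p₀ / ρ ^ (r / k), q₀ / ρ ^ (r / m), ?_, ?_⟩
    · rw [← MvPolynomial.C_pow, ← MvPolynomial.C_mul,
        div_mul_cancel₀ _ (pow_ne_zero _ hρ)]
    · rw [← MvPolynomial.C_pow, ← MvPolynomial.C_mul,
        div_mul_cancel₀ _ (pow_ne_zero _ hρ)]
  · push_neg at hcop
    obtain ⟨p, hp, hpP, hpQ, -⟩ := hcop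
    have hpR : p ∣ R := by
      refine hp.dvd_of_dvd_pow (n := r) ?_
      rw [← heq]
      exact dvd_add (dvd_pow hpP hk.ne') (dvd_pow hpQ hm.ne')
    obtain ⟨a, P₁, hpP₁, hPfac⟩ := WfDvdMonoid.max_power_factor hP hp.irreducible
    obtain ⟨b, Q₁, hpQ₁, hQfac⟩ := WfDvdMonoid.max_power_factor hQ hp.irreducible
    obtain ⟨c, R₁, hpR₁, hRfac⟩ := WfDvdMonoid.max_power_factor hR hp.irreducible
    have ha : 0 < a := by
      rcases Nat.eq_zero_or_pos a with h | h
      · exfalso; rw [h, pow_zero, one_mul] at hPfac; exact hpP₁ (hPfac ▸ hpP)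
      · exact h
    have hb : 0 < b := by
      rcases Nat.eq_zero_or_pos b with h | h
      · exfalso; rw [h, pow_zero, one_mul] at hQfac; exact hpQ₁ (hQfac ▸ hpQ)
      · exact h
    have hc : 0 < c := by
      rcases Nat.eq_zero_or_pos c with h | h
      · exfalso; rw [h, pow_zero, one_mul] at hRfac; exact hpR₁ (hRfac ▸ hpR)
      · exact h
    have hP₁ : P₁ ≠ 0 := fun h => hP (by rw [hPfac, h, mul_zero])
    have hQ₁ : Q₁ ≠ 0 := fun h => hQ (by rw [hQfac, h, mul_zero])
    have hR₁ : R₁ ≠ 0 := fun h => hR (by rw [hRfac, h, mul_zero])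
    have heqp : p ^ (a * k) * P₁ ^ k + p ^ (b * m) * Q₁ ^ m = p ^ (c * r) * R₁ ^ r := by
      rw [hPfac, hQfac, hRfac] at heq
      rw [mul_pow, mul_pow, mul_pow, ← pow_mul, ← pow_mul, ← pow_mul] at heq
      exact heq
    have hVnd : ¬ p ∣ R₁ ^ r := fun h => hpR₁ (hp.dvd_of_dvd_pow h)
    rcases lt_trichotomy (a * k) (b * m) with hxy | hxy | hxy
    · exfalso
      obtain ⟨d, hd⟩ := Nat.exists_eq_add_of_lt hxy
      set D := d + 1 with hD
      have hd' : b * m = a * k + D := by omega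
      have heq2 : p ^ (a * k) * (P₁ ^ k + p ^ D * Q₁ ^ m) = p ^ (c * r) * R₁ ^ r := by
        rw [← heqp, hd', pow_add]; ring
      have hWnd : ¬ p ∣ (P₁ ^ k + p ^ D * Q₁ ^ m) := by
        intro hdvd
        have h1 : p ∣ p ^ D * Q₁ ^ m :=
          dvd_mul_of_dvd_left (dvd_pow_self p (by omega)) _
        have h2 : p ∣ P₁ ^ k := (dvd_add_left h1).mp hdvd
        exact hpP₁ (hp.dvd_of_dvd_pow h2)
      obtain ⟨hxz, hWV⟩ := pow_mul_cancel_aux hp hWnd hVnd heq2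
      have hmD : m ∣ D := by
        have h1 : m ∣ b * m := Dvd.intro_left b rfl
        have h2 : m ∣ a * k := by rw [hxz]; exact (hmr.mul_left c)
        have : D = b * m - a * k := by omega
        rw [this]; exact Nat.dvd_sub h1 h2
      set t := D / m with ht
      have htm : t * m = D := Nat.div_mul_cancel hmD
      have ht1 : 0 < t := Nat.pos_of_ne_zero (fun h => by rw [h, zero_mul] at htm; omega)
      have heq3 : P₁ ^ k + (p ^ t * Q₁) ^ m = R₁ ^ r := by
        rw [mul_pow, ← pow_mul, htm]; exact hWV
      have hdnu : DvdNotUnit R₁ R :=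
        ⟨hR₁, p ^ c, fun h => hp.not_unit (isUnit_of_dvd_unit (dvd_pow_self p hc.ne') h),
          by rw [hRfac]; ring⟩
      obtain ⟨α₁, α₂, hA, hB⟩ := IH R₁ hdnu hR₁ _ _ heq3
      have hdvd : p ∣ MvPolynomial.C α₂ * R₁ ^ (r / m) := by
        rw [← hB]; exact dvd_mul_of_dvd_left (dvd_pow_self p ht1.ne') _
      rcases hp.2.2 _ _ hdvd with h | h
      · rcases eq_or_ne α₂ 0 with h0 | h0
        · rw [h0, MvPolynomial.C_0, zero_mul] at hB
          rcases mul_eq_zero.mp hB with h' | h'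
          · exact pow_ne_zero _ hp.ne_zero h'
          · exact hQ₁ h'
        · exact hp.not_unit (isUnit_of_dvd_unit h (isUnit_C_of_ne_zero h0))
      · exact hpR₁ (hp.dvd_of_dvd_pow h)
    · -- a*k = b*m ≤ c*r : the lifting case
      have heq2 : p ^ (a * k) * (P₁ ^ k + Q₁ ^ m) = p ^ (c * r) * R₁ ^ r := by
        rw [← heqp, ← hxy]; ring
      have hxz := pow_le_aux hp hVnd heq2
      have hrx : r ∣ a * k := by
        rw [← hlcm]
        exact Nat.lcm_dvd (Dvd.intro_left a rfl) (by rw [hxy]; exact Dvd.intro_left b rfl)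
      set w := a * k / r with hw
      have hwr : w * r = a * k := Nat.div_mul_cancel hrx
      have hw1 : 0 < w := Nat.pos_of_ne_zero (fun h => by
        rw [h, zero_mul] at hwr
        exact (Nat.mul_pos ha hk).ne' hwr.symm)
      have hwc : w ≤ c := by
        by_contra hcw
        push_neg at hcw
        have : c * r < w * r := Nat.mul_lt_mul_of_lt_of_le hcw (le_refl r) hr
        omega
      obtain ⟨t, htc⟩ := Nat.exists_eq_add_of_le hwc
      have hcr : p ^ (c * r) * R₁ ^ r = p ^ (a * k) * (p ^ (t * r) * R₁ ^ r) := by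
        rw [htc, add_mul, pow_add, hwr]; ring
      have heq3 : P₁ ^ k + Q₁ ^ m = (p ^ t * R₁) ^ r := by
        rw [mul_pow, ← pow_mul]
        exact mul_left_cancel₀ (pow_ne_zero _ hp.ne_zero) (heq2.trans hcr)
      have hR₂ : p ^ t * R₁ ≠ 0 := mul_ne_zero (pow_ne_zero _ hp.ne_zero) hR₁
      have hdnu : DvdNotUnit (p ^ t * R₁) R :=
        ⟨hR₂, p ^ w, fun h => hp.not_unit (isUnit_of_dvd_unit (dvd_pow_self p hw1.ne') h),
          by rw [hRfac, htc, pow_add]; ring⟩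
      obtain ⟨α₁, α₂, hA, hB⟩ := IH _ hdnu hR₂ _ _ heq3
      have ea : a = w * (r / k) := by
        refine Nat.eq_of_mul_eq_mul_right hk ?_
        rw [← hwr, mul_assoc, Nat.div_mul_cancel hkr]
      have eb : b = w * (r / m) := by
        refine Nat.eq_of_mul_eq_mul_right hm ?_
        rw [← hxy, ← hwr, mul_assoc, Nat.div_mul_cancel hmr]
      refine ⟨α₁, α₂, ?_, ?_⟩
      · rw [hPfac, hA, hRfac, htc, mul_pow, mul_pow, ← pow_mul, ← pow_mul, ea, add_mul,
          pow_add]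
        ring
      · rw [hQfac, hB, hRfac, htc, mul_pow, mul_pow, ← pow_mul, ← pow_mul, eb, add_mul,
          pow_add]
        ring
    · exfalso
      obtain ⟨d, hd⟩ := Nat.exists_eq_add_of_lt hxy
      set D := d + 1 with hD
      have hd' : a * k = b * m + D := by omega
      have heq2 : p ^ (b * m) * (p ^ D * P₁ ^ k + Q₁ ^ m) = p ^ (c * r) * R₁ ^ r := by
        rw [← heqp, hd', pow_add]; ring
      have hWnd : ¬ p ∣ (p ^ D * P₁ ^ k + Q₁ ^ m) := by
        intro hdvd
        have h1 : p ∣ p ^ D * P₁ ^ k :=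
          dvd_mul_of_dvd_left (dvd_pow_self p (by omega)) _
        have h2 : p ∣ Q₁ ^ m := (dvd_add_right h1).mp hdvd
        exact hpQ₁ (hp.dvd_of_dvd_pow h2)
      obtain ⟨hxz, hWV⟩ := pow_mul_cancel_aux hp hWnd hVnd heq2
      have hkD : k ∣ D := by
        have h1 : k ∣ a * k := Dvd.intro_left a rfl
        have h2 : k ∣ b * m := by rw [hxz]; exact (hkr.mul_left c)
        have : D = a * k - b * m := by omega
        rw [this]; exact Nat.dvd_sub h1 h2
      set t := D / k with ht
      have htm : t * k = D := Nat.div_mul_cancel hkD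
      have ht1 : 0 < t := Nat.pos_of_ne_zero (fun h => by rw [h, zero_mul] at htm; omega)
      have heq3 : (p ^ t * P₁) ^ k + Q₁ ^ m = R₁ ^ r := by
        rw [mul_pow, ← pow_mul, htm]; exact hWV
      have hdnu : DvdNotUnit R₁ R :=
        ⟨hR₁, p ^ c, fun h => hp.not_unit (isUnit_of_dvd_unit (dvd_pow_self p hc.ne') h),
          by rw [hRfac]; ring⟩
      obtain ⟨α₁, α₂, hA, hB⟩ := IH R₁ hdnu hR₁ _ _ heq3
      have hdvd : p ∣ MvPolynomial.C α₁ * R₁ ^ (r / k) := by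
        rw [← hA]; exact dvd_mul_of_dvd_left (dvd_pow_self p ht1.ne') _
      rcases hp.2.2 _ _ hdvd with h | h
      · rcases eq_or_ne α₁ 0 with h0 | h0
        · rw [h0, MvPolynomial.C_0, zero_mul] at hA
          rcases mul_eq_zero.mp hA with h' | h'
          · exact pow_ne_zero _ hp.ne_zero h'
          · exact hP₁ h'
        · exact hp.not_unit (isUnit_of_dvd_unit h (isUnit_C_of_ne_zero h0))
      · exact hpR₁ (hp.dvd_of_dvd_pow h)


theorem nat_ineq_of_rat (k m r : ℕ) (hk : 1 ≤ k) (hm : 1 ≤ m) (hr : 1 ≤ r)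
    (habc : (1 : ℚ) / k + 1 / m + 1 / r ≤ 1) :
    m * r + k * r + k * m ≤ k * m * r := by
  have hk' : (0 : ℚ) < k := by exact_mod_cast hk
  have hm' : (0 : ℚ) < m := by exact_mod_cast hm
  have hr' : (0 : ℚ) < r := by exact_mod_cast hr
  have key : (m * r + k * r + k * m : ℚ) ≤ (k * m * r : ℚ) := by
    have h2 := mul_le_mul_of_nonneg_left habc (le_of_lt (by positivity : (0:ℚ) < k * m * r))
    calc (m * r + k * r + k * m : ℚ)
        = (k * m * r) * ((1:ℚ)/k + 1/m + 1/r) := by field_simp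
      _ ≤ (k * m * r) * 1 := h2
      _ = k * m * r := by ring
  exact_mod_cast key

theorem lcm_ineq (k m r : ℕ) (hk : 1 ≤ k) (hm : 1 ≤ m) (hr : 1 ≤ r)
    (hdvd : Nat.lcm k m ∣ r) (h : m * r + k * r + k * m ≤ k * m * r) :
    m * Nat.lcm k m + k * Nat.lcm k m + k * m ≤ k * m * Nat.lcm k m := by
  set L := Nat.lcm k m with hL
  have hL0 : 0 < L := Nat.pos_of_ne_zero (Nat.lcm_ne_zero (by omega) (by omega))
  have hkL : k ∣ L := Nat.dvd_lcm_left k m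
  have hmL : m ∣ L := Nat.dvd_lcm_right k m
  have hkLe : k ≤ L := Nat.le_of_dvd hL0 hkL
  have hmLe : m ≤ L := Nat.le_of_dvd hL0 hmL
  have hk2 : 2 ≤ k := by
    by_contra hc
    have hk1 : k = 1 := by omega
    subst hk1
    simp only [one_mul] at h
    have := h
    generalize m * r = t at this
    omega
  have hm2 : 2 ≤ m := by
    by_contra hc
    have hm1 : m = 1 := by omega
    subst hm1
    simp only [mul_one, one_mul] at h
    generalize hk : k * r = t at h
    omega
  have hnot22 : ¬ (k = 2 ∧ m = 2) := by
    rintro ⟨rfl, rfl⟩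
    omega
  rcases (by omega : k = 2 ∨ 3 ≤ k) with hk3 | hk3
  · subst hk3
    rcases (by omega : m = 3 ∨ 4 ≤ m) with hm4 | hm4
    · subst hm4
      have : L = 6 := by rw [hL]; rfl
      rw [this]
    · nlinarith [hmLe, hm4, hL0]
  · rcases (by omega : m = 2 ∨ 3 ≤ m) with hm3 | hm3
    · subst hm3
      rcases (by omega : k = 3 ∨ 4 ≤ k) with hk4 | hk4
      · subst hk4
        have : L = 6 := by rw [hL]; rfl
        rw [this]
      · nlinarith [hkLe, hk4, hL0]
    · have hL3 : 3 ≤ L := le_trans hk3 hkLe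
      have e1 : 3 * (m * L) ≤ k * (m * L) := Nat.mul_le_mul_right _ hk3
      have e2 : 3 * (k * L) ≤ m * (k * L) := Nat.mul_le_mul_right _ hm3
      have e3 : 3 * (k * m) ≤ L * (k * m) := Nat.mul_le_mul_right _ hL3
      nlinarith [e1, e2, e3]

end MSAux

/-- Generalized Mason–Stothers corollary: if `1/k + 1/m + 1/r ≤ 1`, `ℓ = lcm(k,m)`,
`g = gcd(k,m)`, `ℓ ∣ r`, and `P^k + Q^m = R^r` with `R ≠ 0`, then `P = α₁ R^{(m/g)(r/ℓ)}`
and `Q = α₂ R^{(k/g)(r/ℓ)}` for some constants `α₁, α₂ ∈ ℂ`. -/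
theorem masonStothers_power_corollary (n : ℕ) (k m r : ℕ)
    (hk : 1 ≤ k) (hm : 1 ≤ m) (hr : 1 ≤ r)
    (habc : (1 : ℚ) / k + 1 / m + 1 / r ≤ 1)
    (hdvd : Nat.lcm k m ∣ r)
    (P Q R : MvPolynomial (Fin n) ℂ) (hR : R ≠ 0) (heq : P ^ k + Q ^ m = R ^ r) :
    ∃ α₁ α₂ : ℂ,
      P = MvPolynomial.C α₁ * R ^ ((m / Nat.gcd k m) * (r / Nat.lcm k m)) ∧
      Q = MvPolynomial.C α₂ * R ^ ((k / Nat.gcd k m) * (r / Nat.lcm k m)) := by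
  set L := Nat.lcm k m with hL
  set g := Nat.gcd k m with hg
  set s := r / L with hs
  have hL0 : 0 < L := Nat.pos_of_ne_zero (Nat.lcm_ne_zero (by omega) (by omega))
  have hg0 : 0 < g := Nat.gcd_pos_of_pos_left m (by omega)
  have hineq := MSAux.nat_ineq_of_rat k m r hk hm hr habc
  have hineqL := MSAux.lcm_ineq k m r hk hm hr hdvd hineq
  have hkL : k ∣ L := Nat.dvd_lcm_left k m
  have hmL : m ∣ L := Nat.dvd_lcm_right k m
  have hRs : R ^ s ≠ 0 := pow_ne_zero _ hR
  have heqL : P ^ k + Q ^ m = (R ^ s) ^ L := by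
    rw [← pow_mul, mul_comm s L, Nat.mul_div_cancel' hdvd]
    exact heq
  obtain ⟨α₁, α₂, h1, h2⟩ := MSAux.main n k m L (by omega) (by omega) hL0 hkL hmL rfl hineqL
    (R ^ s) hRs P Q heqL
  have hgl : L / k = m / g := by
    refine Nat.eq_of_mul_eq_mul_left (show 0 < k by omega) ?_
    rw [Nat.mul_div_cancel' hkL, ← Nat.mul_div_assoc k (Nat.gcd_dvd_right k m),
      ← Nat.gcd_mul_lcm k m, Nat.mul_div_cancel_left _ hg0]
  have hgm : L / m = k / g := by
    refine Nat.eq_of_mul_eq_mul_left (show 0 < m by omega) ?_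
    rw [Nat.mul_div_cancel' hmL, ← Nat.mul_div_assoc m (Nat.gcd_dvd_left k m), mul_comm m k,
      ← Nat.gcd_mul_lcm k m, Nat.mul_div_cancel_left _ hg0]
  refine ⟨α₁, α₂, ?_, ?_⟩
  · rw [h1, ← pow_mul, mul_comm s (L / k), hgl]
  · rw [h2, ← pow_mul, mul_comm s (L / m), hgm]
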